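/- Let 𝒜 ⊆ ℕ be a sequence with increasing enumeration a₀ < a₁ < ⋯. The following are equivalent: (i) A has positive increase, i.e. there exists γ > 0 such that x^{−γ}A(x) is almost increasing; (ii) a_{2n} = O(a_n); (iii) liminf_{x→∞} A(λx)/A(x) > 1 for some λ > 1; (iv) s_{𝒜,h} has positive increase for some h ≥ 1 (equivalently, for every h ≥ 1). -/

import Mathlib

open Filter Asymptotics MeasureTheory

/-- Counting function `A(x) = |𝒜 ∩ [0,x]|`. -/
noncomputable def cntA (A : Set ℕ) (x : ℝ) : ℕ :=
  {n : ℕ | n ∈ A ∧ (n : ℝ) ≤ x}.ncard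

/-- The increasing enumeration `a₀ < a₁ < ⋯` of a set `A ⊆ ℕ`. -/
noncomputable def seqA (A : Set ℕ) (n : ℕ) : ℕ := Nat.nth (· ∈ A) n

/-- `A` is an OR sequence: `A(2x) = O(A(x))`. -/
def ORseq (A : Set ℕ) : Prop :=
  (fun x : ℝ => (cntA A (2 * x) : ℝ)) =O[atTop] (fun x : ℝ => (cntA A x : ℝ))

/-- `A` is a PI sequence: `a_{2n} = O(a_n)`. -/
def PIseq (A : Set ℕ) : Prop :=
  (fun n : ℕ => (seqA A (2 * n) : ℝ)) =O[atTop] (fun n : ℕ => (seqA A n : ℝ))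

/-- `A` is an OR₊ sequence: an infinite subset of ℕ that is both OR and PI. -/
def ORplus (A : Set ℕ) : Prop := A.Infinite ∧ ORseq A ∧ PIseq A

/-- `sA A h x` is the number of ordered `h`-tuples of elements of `A` with sum at most `x`. -/
noncomputable def sA (A : Set ℕ) (h : ℕ) (x : ℝ) : ℕ :=
  {t : Fin h → ℕ | (∀ i, t i ∈ A) ∧ ((∑ i, t i : ℕ) : ℝ) ≤ x}.ncard

/-- `f` is almost increasing (on some tail `[x₀, ∞)`): there is `m > 0` with
`f(y) ≥ m·f(x)` for all `y ≥ x ≥ x₀`. -/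
def AlmostIncreasing (f : ℝ → ℝ) : Prop :=
  ∃ m : ℝ, 0 < m ∧ ∃ x₀ : ℝ, ∀ x y : ℝ, x₀ ≤ x → x ≤ y → m * f x ≤ f y

/-- `f` has positive increase: `x^{-γ} f(x)` is almost increasing for some `γ > 0`. -/
def PositiveIncrease (f : ℝ → ℝ) : Prop :=
  ∃ γ : ℝ, 0 < γ ∧ AlmostIncreasing (fun x : ℝ => x ^ (-γ) * f x)

section Aux
open Classical in
/-- cntA equals Nat.count of floor+1, for x ≥ 0. -/
lemma cntA_eq_count (A : Set ℕ) {x : ℝ} (hx : 0 ≤ x) :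
    cntA A x = Nat.count (· ∈ A) (⌊x⌋₊ + 1) := by
  rw [cntA, Nat.count_eq_card_filter_range]
  rw [show {n : ℕ | n ∈ A ∧ (n : ℝ) ≤ x} = ↑((Finset.range (⌊x⌋₊ + 1)).filter (· ∈ A)) from ?_,
    Set.ncard_coe_finset]
  ext n
  simp only [Set.mem_setOf_eq, Finset.coe_filter, Finset.mem_range, Nat.lt_succ_iff]
  constructor
  · rintro ⟨h1, h2⟩; exact ⟨Nat.le_floor h2, h1⟩
  · rintro ⟨h1, h2⟩; exact ⟨h2, le_trans (by exact_mod_cast Nat.cast_le.2 h1) (Nat.floor_le hx)⟩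

lemma cntA_finite (A : Set ℕ) (x : ℝ) : {n : ℕ | n ∈ A ∧ (n : ℝ) ≤ x}.Finite := by
  apply Set.Finite.subset (Set.finite_Iic ⌊x⌋₊)
  rintro n ⟨_, h⟩; exact Nat.le_floor h

lemma cntA_mono (A : Set ℕ) {x y : ℝ} (hxy : x ≤ y) : cntA A x ≤ cntA A y := by
  apply Set.ncard_le_ncard _ (cntA_finite A y)
  rintro n ⟨h1, h2⟩; exact ⟨h1, h2.trans hxy⟩

lemma cntA_le (A : Set ℕ) (x : ℝ) (hx : 0 ≤ x) : (cntA A x : ℝ) ≤ x + 1 := by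
  have : cntA A x ≤ ⌊x⌋₊ + 1 := by
    rw [cntA]
    calc {n : ℕ | n ∈ A ∧ (n : ℝ) ≤ x}.ncard
        ≤ (Set.Iic ⌊x⌋₊).ncard :=
          Set.ncard_le_ncard (fun n hn => Nat.le_floor hn.2) (Set.finite_Iic _)
      _ = ⌊x⌋₊ + 1 := by
          rw [Set.ncard_eq_toFinset_card', Set.toFinset_Iic, Nat.card_Iic]
  calc (cntA A x : ℝ) ≤ (⌊x⌋₊ + 1 : ℕ) := by exact_mod_cast this
    _ ≤ x + 1 := by push_cast; linarith [Nat.floor_le hx]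

lemma seqA_mem (A : Set ℕ) (hA : A.Infinite) (n : ℕ) : seqA A n ∈ A :=
  Nat.nth_mem_of_infinite hA n

/-- A(a_n) = n+1 -/
lemma cntA_seqA (A : Set ℕ) (hA : A.Infinite) (n : ℕ) :
    cntA A ((seqA A n : ℕ) : ℝ) = n + 1 := by
  classical
  rw [cntA_eq_count A (by positivity), Nat.floor_natCast, seqA]
  exact Nat.count_nth_succ_of_infinite (p := (· ∈ A)) hA n

/-- a_m ≤ x → m+1 ≤ A(x) -/
lemma le_cntA (A : Set ℕ) (hA : A.Infinite) {m : ℕ} {x : ℝ} (h : ((seqA A m : ℕ) : ℝ) ≤ x) :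
    m + 1 ≤ cntA A x := by
  have := cntA_mono A h
  rwa [cntA_seqA A hA] at this

/-- a_{A(x)-1} ≤ x -/
lemma seqA_le (A : Set ℕ) (hA : A.Infinite) {x : ℝ} (hx : 0 ≤ x) {k : ℕ}
    (hk : k < cntA A x) : ((seqA A k : ℕ) : ℝ) ≤ x := by
  classical
  rw [cntA_eq_count A hx] at hk
  have := Nat.nth_lt_of_lt_count hk
  rw [Nat.lt_succ_iff] at this
  exact le_trans (by exact_mod_cast Nat.cast_le.2 this) (Nat.floor_le hx)

lemma one_le_cntA (A : Set ℕ) (hA : A.Infinite) {x : ℝ} (hx : ((seqA A 0 : ℕ) : ℝ) ≤ x) :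
    1 ≤ cntA A x := le_cntA A hA hx
end Aux

section Core

lemma iter_step {F : ℝ → ℝ} {lam c x₁ : ℝ} (hlam : 1 ≤ lam) (hc : 0 ≤ c) (hx₁ : 0 ≤ x₁)
    (hstep : ∀ x, x₁ ≤ x → c * F x ≤ F (lam * x)) :
    ∀ k : ℕ, ∀ X, x₁ ≤ X → c ^ k * F X ≤ F (lam ^ k * X) := by
  intro k
  induction k with
  | zero => intro X hX; simp
  | succ k ih =>
    intro X hX
    have hXpos : 0 ≤ X := hx₁.trans hX
    have h1 : x₁ ≤ lam ^ k * X := by nlinarith [one_le_pow₀ hlam (n := k)]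
    calc c ^ (k+1) * F X = c * (c ^ k * F X) := by ring
      _ ≤ c * F (lam ^ k * X) := by
          apply mul_le_mul_of_nonneg_left (ih X hX) hc
      _ ≤ F (lam * (lam ^ k * X)) := hstep _ h1
      _ = F (lam ^ (k+1) * X) := by ring_nf

lemma exists_pow_sandwich {lam t : ℝ} (hlam : 1 < lam) (ht : 1 ≤ t) :
    ∃ k : ℕ, lam ^ k ≤ t ∧ t < lam ^ (k + 1) := by
  classical
  have hex : ∃ n, t < lam ^ n := pow_unbounded_of_one_lt t hlam
  have hn : t < lam ^ (Nat.find hex) := Nat.find_spec hex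
  have hn0 : Nat.find hex ≠ 0 := by
    intro h; rw [h] at hn; simp at hn; linarith
  refine ⟨Nat.find hex - 1, ?_, ?_⟩
  · by_contra h
    push_neg at h
    exact Nat.find_min hex (Nat.sub_lt (Nat.pos_of_ne_zero hn0) one_pos) h
  · rwa [Nat.sub_add_cancel (Nat.one_le_iff_ne_zero.2 hn0)]

lemma step_to_PI {F : ℝ → ℝ} {lam c x₁ : ℝ} (hlam : 1 < lam) (hc : 1 < c) (hx₁ : 1 ≤ x₁)
    (hmono : ∀ x y, x₁ ≤ x → x ≤ y → F x ≤ F y) (hnn : ∀ x, x₁ ≤ x → 0 ≤ F x)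
    (hstep : ∀ x, x₁ ≤ x → c * F x ≤ F (lam * x)) : PositiveIncrease F := by
  have hlam0 : (0:ℝ) < lam := by linarith
  have hc0 : (0:ℝ) < c := by linarith
  set γ : ℝ := Real.log c / Real.log lam with hγdef
  have hloglam : 0 < Real.log lam := Real.log_pos hlam
  have hγ : 0 < γ := div_pos (Real.log_pos hc) hloglam
  have hlamγ : lam ^ (γ:ℝ) = c := by
    rw [Real.rpow_def_of_pos hlam0, hγdef]
    rw [mul_div_cancel₀ _ (ne_of_gt hloglam)]
    exact Real.exp_log hc0
  refine ⟨γ, hγ, c⁻¹, inv_pos.2 hc0, x₁, ?_⟩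
  intro x y hx hxy
  have hx0 : (0:ℝ) < x := lt_of_lt_of_le one_pos (hx₁.trans hx)
  have hy0 : (0:ℝ) < y := lt_of_lt_of_le hx0 hxy
  have ht : 1 ≤ y / x := (one_le_div hx0).2 hxy
  obtain ⟨k, hk1, hk2⟩ := exists_pow_sandwich hlam ht
  have hkx : lam ^ k * x ≤ y := (le_div_iff₀ hx0).1 hk1
  have hyk : y < lam ^ (k+1) * x := (div_lt_iff₀ hx0).1 hk2
  -- F y ≥ c^k F x
  have h1 : c ^ k * F x ≤ F y := by
    calc c ^ k * F x ≤ F (lam ^ k * x) :=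
          iter_step (le_of_lt hlam) (le_of_lt hc0) (by linarith) hstep k x hx
      _ ≤ F y := hmono _ _ (by nlinarith [one_le_pow₀ hlam.le (n := k)]) hkx
  -- y ^ (-γ) ≥ (lam^(k+1) x)^(-γ)
  have hpowpos : (0:ℝ) < lam ^ (k+1) := pow_pos hlam0 _
  have h2 : (lam ^ (k+1) * x) ^ (-γ) ≤ y ^ (-γ) :=
    Real.rpow_le_rpow_of_nonpos hy0 hyk.le (by linarith)
  have h3 : (lam ^ (k+1) * x) ^ (-γ) = c⁻¹ ^ (k+1) * x ^ (-γ) := by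
    rw [Real.mul_rpow hpowpos.le hx0.le]
    congr 1
    rw [← Real.rpow_natCast lam (k+1), ← Real.rpow_mul hlam0.le,
      mul_comm ((k+1 : ℕ) : ℝ), Real.rpow_mul hlam0.le, Real.rpow_neg hlam0.le, hlamγ,
      Real.rpow_natCast, inv_pow]
  have hFx : 0 ≤ F x := hnn x hx
  have hFy : 0 ≤ c ^ k * F x := mul_nonneg (pow_nonneg hc0.le k) hFx
  have h4 : (lam ^ (k+1) * x) ^ (-γ) * (c ^ k * F x) ≤ y ^ (-γ) * F y :=
    mul_le_mul h2 h1 hFy (Real.rpow_nonneg hy0.le _)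
  rw [h3] at h4
  have heq : c⁻¹ ^ (k+1) * x ^ (-γ) * (c ^ k * F x) = c⁻¹ * (x ^ (-γ) * F x) := by
    have : c⁻¹ ^ (k+1) * c ^ k = c⁻¹ := by
      rw [pow_succ]
      rw [mul_assoc, mul_comm c⁻¹, ← mul_assoc, ← mul_pow, inv_mul_cancel₀ hc0.ne', one_pow, one_mul]
    calc c⁻¹ ^ (k+1) * x ^ (-γ) * (c ^ k * F x)
        = (c⁻¹ ^ (k+1) * c ^ k) * (x ^ (-γ) * F x) := by ring
      _ = c⁻¹ * (x ^ (-γ) * F x) := by rw [this]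
  rw [heq] at h4
  exact h4

lemma step_of_PI {F : ℝ → ℝ} (hF : PositiveIncrease F) (hnn : ∀ x, 0 ≤ F x) :
    ∃ lam x₁ : ℝ, 1 < lam ∧ 1 ≤ x₁ ∧ ∀ x, x₁ ≤ x → 2 * F x ≤ F (lam * x) := by
  obtain ⟨γ, hγ, m, hm, x₀, hai⟩ := hF
  set lam : ℝ := max 2 ((2/m) ^ (γ⁻¹ : ℝ)) with hlamdef
  have hlam2 : (2:ℝ) ≤ lam := le_max_left _ _
  have hlam1 : (1:ℝ) < lam := by linarith
  have hlam0 : (0:ℝ) < lam := by linarith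
  refine ⟨lam, max x₀ 1, hlam1, le_max_right _ _, ?_⟩
  intro x hx
  have hx1 : (1:ℝ) ≤ x := le_trans (le_max_right _ _) hx
  have hx0 : (0:ℝ) < x := by linarith
  have hxx : x ≤ lam * x := by nlinarith
  have key := hai x (lam * x) (le_trans (le_max_left _ _) hx) hxx
  simp only at key
  -- key : m * (x ^ (-γ) * F x) ≤ (lam * x) ^ (-γ) * F (lam * x)
  have hsplit : (lam * x) ^ (-γ) = lam ^ (-γ) * x ^ (-γ) := Real.mul_rpow hlam0.le hx0.le
  rw [hsplit] at key
  have hxγ : (0:ℝ) < x ^ (γ:ℝ) := Real.rpow_pos_of_pos hx0 _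
  have hxinv : x ^ (-γ:ℝ) * x ^ (γ:ℝ) = 1 := by
    rw [← Real.rpow_add hx0]; simp
  -- multiply key by x ^ γ
  have key2 : m * F x ≤ lam ^ (-γ:ℝ) * F (lam * x) := by
    have := mul_le_mul_of_nonneg_right key hxγ.le
    calc m * F x = m * (x ^ (-γ:ℝ) * F x) * x ^ (γ:ℝ) := by
          rw [show m * (x ^ (-γ:ℝ) * F x) * x ^ (γ:ℝ)
              = m * F x * (x ^ (-γ:ℝ) * x ^ (γ:ℝ)) by ring, hxinv, mul_one]
      _ ≤ lam ^ (-γ:ℝ) * x ^ (-γ:ℝ) * F (lam * x) * x ^ (γ:ℝ) := this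
      _ = lam ^ (-γ:ℝ) * F (lam * x) * (x ^ (-γ:ℝ) * x ^ (γ:ℝ)) := by ring
      _ = lam ^ (-γ:ℝ) * F (lam * x) := by rw [hxinv, mul_one]
  have hlamγpos : (0:ℝ) < lam ^ (γ:ℝ) := Real.rpow_pos_of_pos hlam0 _
  have hlaminv : lam ^ (-γ:ℝ) = (lam ^ (γ:ℝ))⁻¹ := by
    rw [Real.rpow_neg hlam0.le]
  have hbig : 2/m ≤ lam ^ (γ:ℝ) := by
    have h1 : ((2/m) ^ (γ⁻¹:ℝ)) ^ (γ:ℝ) ≤ lam ^ (γ:ℝ) :=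
      Real.rpow_le_rpow (Real.rpow_nonneg (by positivity) _) (le_max_right _ _) hγ.le
    rwa [← Real.rpow_mul (by positivity), inv_mul_cancel₀ (ne_of_gt hγ), Real.rpow_one] at h1
  have h2m : 2 ≤ m * lam ^ (γ:ℝ) := by
    rw [div_le_iff₀ hm] at hbig; linarith [hbig]
  -- F (lam x) ≥ m lam^γ F x ≥ 2 F x
  have key3 : m * lam ^ (γ:ℝ) * F x ≤ F (lam * x) := by
    have := mul_le_mul_of_nonneg_right key2 hlamγpos.le
    calc m * lam ^ (γ:ℝ) * F x = m * F x * lam ^ (γ:ℝ) := by ring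
      _ ≤ lam ^ (-γ:ℝ) * F (lam * x) * lam ^ (γ:ℝ) := this
      _ = F (lam * x) * (lam ^ (γ:ℝ) * (lam ^ (γ:ℝ))⁻¹) := by rw [hlaminv]; ring
      _ = F (lam * x) := by rw [mul_inv_cancel₀ (ne_of_gt hlamγpos), mul_one]
  nlinarith [hnn x, mul_le_mul_of_nonneg_right h2m (hnn x)]

end Core

section SA
open Classical in
lemma cntA_set_eq (A : Set ℕ) {x : ℝ} (hx : 0 ≤ x) :
    {n : ℕ | n ∈ A ∧ (n : ℝ) ≤ x} = ↑((Finset.range (⌊x⌋₊ + 1)).filter (· ∈ A)) := by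
  ext n
  simp only [Set.mem_setOf_eq, Finset.coe_filter, Finset.mem_range, Nat.lt_succ_iff]
  constructor
  · rintro ⟨h1, h2⟩; exact ⟨Nat.le_floor h2, h1⟩
  · rintro ⟨h1, h2⟩; exact ⟨h2, le_trans (by exact_mod_cast Nat.cast_le.2 h1) (Nat.floor_le hx)⟩

open Classical in
lemma cntA_card (A : Set ℕ) {x : ℝ} (hx : 0 ≤ x) :
    cntA A x = ((Finset.range (⌊x⌋₊ + 1)).filter (· ∈ A)).card := by
  rw [cntA, cntA_set_eq A hx, Set.ncard_coe_finset]

open Classical in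
lemma sA_subset (A : Set ℕ) (h : ℕ) (x : ℝ) :
    {t : Fin h → ℕ | (∀ i, t i ∈ A) ∧ ((∑ i, t i : ℕ) : ℝ) ≤ x} ⊆
      ↑(Fintype.piFinset fun _ : Fin h => (Finset.range (⌊x⌋₊ + 1)).filter (· ∈ A)) := by
  rintro t ⟨h1, h2⟩
  simp only [Finset.coe_sort_coe, Finset.mem_coe, Fintype.mem_piFinset, Finset.mem_filter,
    Finset.mem_range, Nat.lt_succ_iff]
  intro i
  refine ⟨Nat.le_floor ?_, h1 i⟩
  calc ((t i : ℕ) : ℝ) ≤ ((∑ j, t j : ℕ) : ℝ) := by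
        exact_mod_cast Finset.single_le_sum (fun j _ => Nat.zero_le (t j)) (Finset.mem_univ i)
    _ ≤ x := h2

lemma sA_set_finite (A : Set ℕ) (h : ℕ) (x : ℝ) :
    {t : Fin h → ℕ | (∀ i, t i ∈ A) ∧ ((∑ i, t i : ℕ) : ℝ) ≤ x}.Finite := by
  classical
  exact Set.Finite.subset (Finset.finite_toSet _) (sA_subset A h x)

lemma sA_mono (A : Set ℕ) (h : ℕ) {x y : ℝ} (hxy : x ≤ y) : sA A h x ≤ sA A h y := by
  apply Set.ncard_le_ncard _ (sA_set_finite A h y)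
  rintro t ⟨h1, h2⟩; exact ⟨h1, h2.trans hxy⟩

lemma sA_le_pow (A : Set ℕ) (h : ℕ) {x : ℝ} (hx : 0 ≤ x) :
    sA A h x ≤ (cntA A x) ^ h := by
  classical
  calc sA A h x ≤ (Fintype.piFinset fun _ : Fin h =>
          (Finset.range (⌊x⌋₊ + 1)).filter (· ∈ A)).card := by
        rw [sA, ← Set.ncard_coe_finset]
        exact Set.ncard_le_ncard (sA_subset A h x) (Finset.finite_toSet _)
    _ = (cntA A x) ^ h := by
        rw [Fintype.card_piFinset, cntA_card A hx]
        simp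

lemma pow_le_sA (A : Set ℕ) {h : ℕ} (hh : 1 ≤ h) {x : ℝ} (hx : 0 ≤ x) :
    (cntA A (x / h)) ^ h ≤ sA A h x := by
  classical
  have hh0 : (0:ℝ) < (h:ℝ) := by exact_mod_cast hh
  have hxh : (0:ℝ) ≤ x / h := div_nonneg hx hh0.le
  have hsub : ↑(Fintype.piFinset fun _ : Fin h =>
      (Finset.range (⌊x / h⌋₊ + 1)).filter (· ∈ A)) ⊆
      {t : Fin h → ℕ | (∀ i, t i ∈ A) ∧ ((∑ i, t i : ℕ) : ℝ) ≤ x} := by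
    intro t ht
    simp only [Finset.coe_sort_coe, Finset.mem_coe, Fintype.mem_piFinset, Finset.mem_filter,
      Finset.mem_range, Nat.lt_succ_iff] at ht
    refine ⟨fun i => (ht i).2, ?_⟩
    push_cast
    calc (∑ i, (t i : ℝ)) ≤ ∑ _i : Fin h, x / h := by
          apply Finset.sum_le_sum
          intro i _
          exact le_trans (by exact_mod_cast Nat.cast_le.2 (ht i).1) (Nat.floor_le hxh)
      _ = x := by
          rw [Finset.sum_const, Finset.card_univ, Fintype.card_fin, nsmul_eq_mul]
          field_simp
  calc (cntA A (x / h)) ^ h = (Fintype.piFinset fun _ : Fin h =>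
          (Finset.range (⌊x / h⌋₊ + 1)).filter (· ∈ A)).card := by
        rw [Fintype.card_piFinset, cntA_card A hxh]; simp
    _ ≤ sA A h x := by
        rw [sA, ← Set.ncard_coe_finset]
        exact Set.ncard_le_ncard hsub (sA_set_finite A h x)
end SA

section Cob
lemma cntA_cobounded (A : Set ℕ) (hA : A.Infinite) {lam : ℝ} (hlam : 1 < lam) :
    Filter.IsCoboundedUnder (· ≥ ·) Filter.atTop
      (fun x : ℝ => (cntA A (lam * x) : ℝ) / (cntA A x : ℝ)) := by
  have hlam0 : (0:ℝ) < lam := by linarith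
  refine ⟨lam ^ 2, fun a ha => ?_⟩
  rw [Filter.eventually_map] at ha
  by_contra hcon
  push_neg at hcon
  -- hcon : lam ^ 2 < a
  have ha0 : (0:ℝ) < a := lt_trans (by positivity) hcon
  obtain ⟨X₀, hX₀⟩ := Filter.eventually_atTop.1 ha
  set X : ℝ := max X₀ (max ((seqA A 0 : ℕ) : ℝ) 1) with hXdef
  have hX1 : (1:ℝ) ≤ X := le_trans (le_max_right _ _) (le_max_right _ _)
  have hstep : ∀ x, X ≤ x → a * ((cntA A x : ℝ)) ≤ (cntA A (lam * x) : ℝ) := by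
    intro x hx
    have h1 : 1 ≤ cntA A x :=
      one_le_cntA A hA (le_trans (le_trans (le_max_left _ _) (le_max_right _ _)) hx)
    have hpos : (0:ℝ) < (cntA A x : ℝ) := by exact_mod_cast h1
    have := hX₀ x (le_trans (le_max_left _ _) hx)
    exact (le_div_iff₀ hpos).1 this
  have hiter := iter_step hlam.le ha0.le (by linarith) hstep
  have hbound : ∀ k : ℕ, a ^ k ≤ lam ^ k * (X + 1) := by
    intro k
    have h1 : 1 ≤ cntA A X := one_le_cntA A hA
      (le_trans (le_max_left _ _) (le_max_right _ _))
    have h1' : (1:ℝ) ≤ (cntA A X : ℝ) := by exact_mod_cast h1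
    have h2 : a ^ k * 1 ≤ a ^ k * (cntA A X : ℝ) :=
      mul_le_mul_of_nonneg_left h1' (by positivity)
    have h3 : (cntA A (lam ^ k * X) : ℝ) ≤ lam ^ k * X + 1 :=
      cntA_le A _ (by positivity)
    have h4 : lam ^ k * X + 1 ≤ lam ^ k * (X + 1) := by
      have := one_le_pow₀ hlam.le (n := k)
      nlinarith
    calc a ^ k = a ^ k * 1 := by ring
      _ ≤ a ^ k * (cntA A X : ℝ) := h2
      _ ≤ (cntA A (lam ^ k * X) : ℝ) := hiter k X le_rfl
      _ ≤ lam ^ k * X + 1 := h3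
      _ ≤ lam ^ k * (X + 1) := h4
  have hdiv : 1 < a / lam := by
    rw [lt_div_iff₀ hlam0]; nlinarith
  obtain ⟨k, hk⟩ := pow_unbounded_of_one_lt (X + 1) hdiv
  have : a ^ k = (a / lam) ^ k * lam ^ k := by
    rw [← mul_pow, div_mul_cancel₀ _ (ne_of_gt hlam0)]
  have hlamk : (0:ℝ) < lam ^ k := by positivity
  nlinarith [hbound k, mul_lt_mul_of_pos_right hk hlamk]
end Cob

section Main
variable {A : Set ℕ}

lemma cntA_nonneg (A : Set ℕ) : ∀ x : ℝ, 0 ≤ ((cntA A x : ℕ) : ℝ) := fun _ => by positivity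

lemma imp13 (hA : A.Infinite) (h1 : PositiveIncrease (fun x : ℝ => (cntA A x : ℝ))) :
    ∃ lam : ℝ, 1 < lam ∧
      1 < Filter.liminf (fun x : ℝ => (cntA A (lam * x) : ℝ) / (cntA A x : ℝ)) Filter.atTop := by
  obtain ⟨lam, x₁, hlam, hx₁, hstep⟩ := step_of_PI h1 (cntA_nonneg A)
  refine ⟨lam, hlam, lt_of_lt_of_le one_lt_two
    (Filter.le_liminf_of_le (cntA_cobounded A hA hlam) ?_)⟩
  filter_upwards [Filter.eventually_ge_atTop (max x₁ ((seqA A 0 : ℕ) : ℝ))] with x hx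
  have h1' : 1 ≤ cntA A x := one_le_cntA A hA (le_trans (le_max_right _ _) hx)
  have hpos : (0:ℝ) < (cntA A x : ℝ) := by exact_mod_cast h1'
  rw [le_div_iff₀ hpos]
  exact hstep x (le_trans (le_max_left _ _) hx)

lemma imp31 (hA : A.Infinite)
    (h3 : ∃ lam : ℝ, 1 < lam ∧
      1 < Filter.liminf (fun x : ℝ => (cntA A (lam * x) : ℝ) / (cntA A x : ℝ)) Filter.atTop) :
    PositiveIncrease (fun x : ℝ => (cntA A x : ℝ)) := by
  obtain ⟨lam, hlam, hliminf⟩ := h3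
  set u := fun x : ℝ => (cntA A (lam * x) : ℝ) / (cntA A x : ℝ) with hu
  have hbdd : Filter.IsBoundedUnder (· ≥ ·) Filter.atTop u :=
    Filter.isBoundedUnder_of ⟨0, fun x => by positivity⟩
  set b : ℝ := (1 + Filter.liminf u Filter.atTop) / 2 with hb
  have hb1 : 1 < b := by rw [hb]; linarith
  have hbL : b < Filter.liminf u Filter.atTop := by rw [hb]; linarith
  have hev := Filter.eventually_lt_of_lt_liminf hbL hbdd
  obtain ⟨X, hX⟩ := Filter.eventually_atTop.1 hev
  have hx₁ : (1:ℝ) ≤ max X (max ((seqA A 0 : ℕ) : ℝ) 1) :=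
    le_trans (le_max_right _ _) (le_max_right _ _)
  refine step_to_PI hlam hb1 hx₁
    (fun x y _ hxy => by exact_mod_cast cntA_mono A hxy)
    (fun x _ => by positivity) ?_
  intro x hx
  have h1' : 1 ≤ cntA A x :=
    one_le_cntA A hA (le_trans (le_trans (le_max_left _ _) (le_max_right _ _)) hx)
  have hpos : (0:ℝ) < (cntA A x : ℝ) := by exact_mod_cast h1'
  have := hX x (le_trans (le_max_left _ _) hx)
  exact ((lt_div_iff₀ hpos).1 this).le

lemma imp12 (hA : A.Infinite) (h1 : PositiveIncrease (fun x : ℝ => (cntA A x : ℝ))) :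
    (fun n : ℕ => (seqA A (2 * n) : ℝ)) =O[Filter.atTop] (fun n : ℕ => (seqA A n : ℝ)) := by
  obtain ⟨γ, hγ, m, hm, x₀, hai⟩ := h1
  rw [Asymptotics.isBigO_iff]
  refine ⟨(2/m) ^ (γ⁻¹ : ℝ), ?_⟩
  filter_upwards [Filter.eventually_ge_atTop (max ⌈x₀⌉₊ 1)] with n hn
  have hn1 : 1 ≤ n := le_trans (le_max_right _ _) hn
  have hinf : {x | x ∈ A}.Infinite := hA
  have hna : (n : ℝ) ≤ ((seqA A n : ℕ) : ℝ) := by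
    exact_mod_cast Nat.le_nth (p := (· ∈ A)) (fun hf => absurd hf hinf)
  have hx₀ : x₀ ≤ ((seqA A n : ℕ) : ℝ) := by
    calc x₀ ≤ (⌈x₀⌉₊ : ℝ) := Nat.le_ceil x₀
      _ ≤ (n : ℝ) := by exact_mod_cast le_trans (le_max_left _ _) hn
      _ ≤ _ := hna
  have hmono : seqA A n ≤ seqA A (2 * n) := Nat.nth_monotone hinf (by omega)
  have hmono' : ((seqA A n : ℕ) : ℝ) ≤ ((seqA A (2*n) : ℕ) : ℝ) := by exact_mod_cast hmono
  have key := hai ((seqA A n : ℕ) : ℝ) ((seqA A (2*n) : ℕ) : ℝ) hx₀ hmono'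
  simp only at key
  have e1 : ((cntA A ((seqA A n : ℕ) : ℝ) : ℕ) : ℝ) = (n : ℝ) + 1 := by
    rw [cntA_seqA A hA]; push_cast; ring
  have e2 : ((cntA A ((seqA A (2*n) : ℕ) : ℝ) : ℕ) : ℝ) = 2 * (n : ℝ) + 1 := by
    rw [cntA_seqA A hA]; push_cast; ring
  rw [e1, e2] at key
  set an : ℝ := ((seqA A n : ℕ) : ℝ)
  set a2n : ℝ := ((seqA A (2*n) : ℕ) : ℝ)
  have han0 : (0:ℝ) < an := lt_of_lt_of_le (by exact_mod_cast hn1) hna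
  have ha2n0 : (0:ℝ) < a2n := lt_of_lt_of_le han0 hmono'
  have hPn : (0:ℝ) < an ^ (γ:ℝ) := Real.rpow_pos_of_pos han0 _
  have hQn : (0:ℝ) < a2n ^ (γ:ℝ) := Real.rpow_pos_of_pos ha2n0 _
  have hinvn : an ^ (-γ:ℝ) = (an ^ (γ:ℝ))⁻¹ := Real.rpow_neg han0.le _
  have hinv2n : a2n ^ (-γ:ℝ) = (a2n ^ (γ:ℝ))⁻¹ := Real.rpow_neg ha2n0.le _
  -- step 1 : m * an^(-γ) ≤ 2 * a2n^(-γ)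
  have h5 : m * an ^ (-γ:ℝ) ≤ 2 * a2n ^ (-γ:ℝ) := by
    have hq : (0:ℝ) ≤ a2n ^ (-γ:ℝ) := by rw [hinv2n]; positivity
    have h4 : m * (an ^ (-γ:ℝ) * ((n:ℝ) + 1)) ≤ 2 * a2n ^ (-γ:ℝ) * ((n:ℝ) + 1) := by
      calc m * (an ^ (-γ:ℝ) * ((n:ℝ) + 1)) ≤ a2n ^ (-γ:ℝ) * (2*(n:ℝ) + 1) := key
        _ ≤ 2 * a2n ^ (-γ:ℝ) * ((n:ℝ) + 1) := by nlinarith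
    have hn1' : (0:ℝ) < (n:ℝ) + 1 := by positivity
    have := le_of_mul_le_mul_right (by linarith [h4] :
      (m * an ^ (-γ:ℝ)) * ((n:ℝ)+1) ≤ (2 * a2n ^ (-γ:ℝ)) * ((n:ℝ)+1)) hn1'
    exact this
  -- step 2 : a2n^γ ≤ (2/m) * an^γ
  have h6 : a2n ^ (γ:ℝ) ≤ (2/m) * an ^ (γ:ℝ) := by
    rw [hinvn, hinv2n] at h5
    rw [show m * (an ^ (γ:ℝ))⁻¹ = m / an ^ (γ:ℝ) by ring,
      show 2 * (a2n ^ (γ:ℝ))⁻¹ = 2 / a2n ^ (γ:ℝ) by ring,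
      div_le_div_iff₀ hPn hQn] at h5
    rw [div_mul_eq_mul_div, le_div_iff₀ hm]
    nlinarith
  -- step 3 : take γ⁻¹ powers
  have h8 : a2n ≤ (2/m) ^ (γ⁻¹:ℝ) * an := by
    have hr : (a2n ^ (γ:ℝ)) ^ (γ⁻¹:ℝ) ≤ ((2/m) * an ^ (γ:ℝ)) ^ (γ⁻¹:ℝ) :=
      Real.rpow_le_rpow hQn.le h6 (by positivity)
    rw [← Real.rpow_mul ha2n0.le, mul_inv_cancel₀ (ne_of_gt hγ), Real.rpow_one,
      Real.mul_rpow (by positivity) hPn.le, ← Real.rpow_mul han0.le,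
      mul_inv_cancel₀ (ne_of_gt hγ), Real.rpow_one] at hr
    exact hr
  have : ‖a2n‖ = a2n := Real.norm_of_nonneg ha2n0.le
  rw [this, Real.norm_of_nonneg han0.le]
  exact h8

lemma imp21 (hA : A.Infinite)
    (h2 : (fun n : ℕ => (seqA A (2 * n) : ℝ)) =O[Filter.atTop] (fun n : ℕ => (seqA A n : ℝ))) :
    PositiveIncrease (fun x : ℝ => (cntA A x : ℝ)) := by
  rw [Asymptotics.isBigO_iff] at h2
  obtain ⟨C, hC⟩ := h2
  obtain ⟨N, hN⟩ := Filter.eventually_atTop.1 hC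
  set C' : ℝ := max C 1 with hC'def
  have hC'1 : (1:ℝ) ≤ C' := le_max_right _ _
  have hbound : ∀ n, N ≤ n → ((seqA A (2*n) : ℕ) : ℝ) ≤ C' * ((seqA A n : ℕ) : ℝ) := by
    intro n hn
    have := hN n hn
    rw [Real.norm_of_nonneg (by positivity), Real.norm_of_nonneg (by positivity)] at this
    calc ((seqA A (2*n) : ℕ) : ℝ) ≤ C * ((seqA A n : ℕ) : ℝ) := this
      _ ≤ C' * ((seqA A n : ℕ) : ℝ) :=
          mul_le_mul_of_nonneg_right (le_max_left _ _) (by positivity)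
  set M : ℕ := max N 1 with hMdef
  have hx₁ : (1:ℝ) ≤ max ((seqA A M : ℕ) : ℝ) 1 := le_max_right _ _
  refine step_to_PI (lam := C' + 1) (c := 3/2) (by linarith) (by norm_num) hx₁
    (fun x y _ hxy => by exact_mod_cast cntA_mono A hxy)
    (fun x _ => by positivity) ?_
  intro x hx
  have hx1 : (1:ℝ) ≤ x := le_trans (le_max_right _ _) hx
  have hx0 : (0:ℝ) ≤ x := by linarith
  have hxM : ((seqA A M : ℕ) : ℝ) ≤ x := le_trans (le_max_left _ _) hx
  have hcnt : M + 1 ≤ cntA A x := le_cntA A hA hxM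
  set n : ℕ := cntA A x - 1 with hndef
  have hn : cntA A x = n + 1 := by omega
  have hnM : M ≤ n := by omega
  have hn1 : 1 ≤ n := le_trans (le_max_right _ _) hnM
  have han : ((seqA A n : ℕ) : ℝ) ≤ x := seqA_le A hA hx0 (by omega)
  have h2n : ((seqA A (2*n) : ℕ) : ℝ) ≤ C' * ((seqA A n : ℕ) : ℝ) :=
    hbound n (le_trans (le_max_left _ _) hnM)
  have hkey : ((seqA A (2*n) : ℕ) : ℝ) ≤ (C' + 1) * x := by
    calc ((seqA A (2*n) : ℕ) : ℝ) ≤ C' * ((seqA A n : ℕ) : ℝ) := h2n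
      _ ≤ C' * x := mul_le_mul_of_nonneg_left han (by linarith)
      _ ≤ (C' + 1) * x := by nlinarith
  have hlow : 2*n + 1 ≤ cntA A ((C' + 1) * x) := le_cntA A hA hkey
  have hlow' : (2*(n:ℝ) + 1) ≤ (cntA A ((C' + 1) * x) : ℝ) := by exact_mod_cast hlow
  have hcx : ((cntA A x : ℕ) : ℝ) = (n:ℝ) + 1 := by rw [hn]; push_cast; ring
  rw [hcx]
  have : (1:ℝ) ≤ (n:ℝ) := by exact_mod_cast hn1
  nlinarith

lemma imp15 (hA : A.Infinite) (h1 : PositiveIncrease (fun x : ℝ => (cntA A x : ℝ))) :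
    ∀ h : ℕ, 1 ≤ h → PositiveIncrease (fun x : ℝ => (sA A h x : ℝ)) := by
  intro h hh
  obtain ⟨lam, x₁, hlam, hx₁, hstep⟩ := step_of_PI h1 (cntA_nonneg A)
  have hh0 : (0:ℝ) < (h:ℝ) := by exact_mod_cast hh
  have hh1 : (1:ℝ) ≤ (h:ℝ) := by exact_mod_cast hh
  obtain ⟨j, hj⟩ := pow_unbounded_of_one_lt (h:ℝ) hlam
  have hlam0 : (0:ℝ) < lam := by linarith
  have hμ : 1 < lam ^ (j+1) := one_lt_pow₀ hlam (Nat.succ_ne_zero j)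
  have hc : (1:ℝ) < 2 ^ h := one_lt_pow₀ one_lt_two (by omega)
  have hx₂ : (1:ℝ) ≤ max ((h:ℝ) * x₁) 1 := le_max_right _ _
  refine step_to_PI hμ hc hx₂
    (fun x y _ hxy => by exact_mod_cast sA_mono A h hxy)
    (fun x _ => by positivity) ?_
  intro x hx
  have hx1 : (1:ℝ) ≤ x := le_trans (le_max_right _ _) hx
  have hx0 : (0:ℝ) < x := by linarith
  have hxx₁ : x₁ ≤ x := by
    have h' : (h:ℝ) * x₁ ≤ x := le_trans (le_max_left _ _) hx
    nlinarith [hh1, hx₁]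
  have key1 : 2 * ((cntA A x : ℕ) : ℝ) ≤ ((cntA A (lam * x) : ℕ) : ℝ) := hstep x hxx₁
  have key2 : lam * x ≤ lam ^ (j+1) * x / h := by
    rw [le_div_iff₀ hh0]
    have he : lam ^ (j+1) = lam ^ j * lam := by ring
    have hlx : (0:ℝ) < lam * x := mul_pos hlam0 hx0
    nlinarith [mul_le_mul_of_nonneg_left hj.le hlx.le]
  have hcmono : ((cntA A (lam * x) : ℕ) : ℝ) ≤ ((cntA A (lam ^ (j+1) * x / h) : ℕ) : ℝ) := by
    exact_mod_cast cntA_mono A key2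
  have hup : ((sA A h x : ℕ) : ℝ) ≤ ((cntA A x : ℕ) : ℝ) ^ h := by
    rw [← Nat.cast_pow]; exact_mod_cast sA_le_pow A h hx0.le
  have hlow : ((cntA A (lam ^ (j+1) * x / h) : ℕ) : ℝ) ^ h ≤ ((sA A h (lam ^ (j+1) * x) : ℕ) : ℝ) := by
    rw [← Nat.cast_pow]; exact_mod_cast pow_le_sA A hh (by positivity : (0:ℝ) ≤ lam ^ (j+1) * x)
  have hcnn : (0:ℝ) ≤ ((cntA A x : ℕ) : ℝ) := by positivity
  calc (2:ℝ) ^ h * ((sA A h x : ℕ) : ℝ) ≤ 2 ^ h * ((cntA A x : ℕ) : ℝ) ^ h :=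
        mul_le_mul_of_nonneg_left hup (by positivity)
    _ = (2 * ((cntA A x : ℕ) : ℝ)) ^ h := by rw [mul_pow]
    _ ≤ ((cntA A (lam * x) : ℕ) : ℝ) ^ h := pow_le_pow_left₀ (by positivity) key1 h
    _ ≤ ((cntA A (lam ^ (j+1) * x / h) : ℕ) : ℝ) ^ h := pow_le_pow_left₀ (by positivity) hcmono h
    _ ≤ ((sA A h (lam ^ (j+1) * x) : ℕ) : ℝ) := hlow

lemma imp41 (hA : A.Infinite)
    (h4 : ∃ h : ℕ, 1 ≤ h ∧ PositiveIncrease (fun x : ℝ => (sA A h x : ℝ))) :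
    PositiveIncrease (fun x : ℝ => (cntA A x : ℝ)) := by
  obtain ⟨h, hh, hPI⟩ := h4
  obtain ⟨lam, x₁, hlam, hx₁, hstep⟩ := step_of_PI hPI (fun x => by positivity)
  have hh0 : (0:ℝ) < (h:ℝ) := by exact_mod_cast hh
  set c' : ℝ := 2 ^ ((h:ℝ)⁻¹) with hc'def
  have hc' : 1 < c' := by
    rw [hc'def, Real.one_lt_rpow_iff_of_pos (by norm_num)]
    left; exact ⟨one_lt_two, by positivity⟩
  have hc'0 : (0:ℝ) < c' := by linarith
  have hc'h : c' ^ h = 2 := by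
    rw [hc'def, ← Real.rpow_natCast (2 ^ ((h:ℝ)⁻¹)) h, ← Real.rpow_mul (by norm_num),
      inv_mul_cancel₀ (ne_of_gt hh0), Real.rpow_one]
  have hh1 : (1:ℝ) ≤ (h:ℝ) := by exact_mod_cast hh
  have hlamh : 1 < lam * h := by nlinarith [hh1]
  refine step_to_PI hlamh hc' (le_max_right x₁ 1)
    (fun x y _ hxy => by exact_mod_cast cntA_mono A hxy)
    (fun x _ => by positivity) ?_
  intro u hu
  have hu1 : (1:ℝ) ≤ u := le_trans (le_max_right _ _) hu
  have hu0 : (0:ℝ) < u := by linarith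
  have hux₁ : x₁ ≤ u := le_trans (le_max_left _ _) hu
  have hhu : x₁ ≤ (h:ℝ) * u := by nlinarith [hh1, hu0]
  have key : 2 * ((sA A h ((h:ℝ) * u) : ℕ) : ℝ) ≤ ((sA A h (lam * ((h:ℝ) * u)) : ℕ) : ℝ) :=
    hstep _ hhu
  have hlow : ((cntA A u : ℕ) : ℝ) ^ h ≤ ((sA A h ((h:ℝ) * u) : ℕ) : ℝ) := by
    have := pow_le_sA A hh (by positivity : (0:ℝ) ≤ (h:ℝ) * u)
    rw [mul_div_cancel_left₀ u (ne_of_gt hh0)] at this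
    rw [← Nat.cast_pow]; exact_mod_cast this
  have hup : ((sA A h (lam * ((h:ℝ) * u)) : ℕ) : ℝ) ≤ ((cntA A (lam * ((h:ℝ) * u)) : ℕ) : ℝ) ^ h := by
    rw [← Nat.cast_pow]; exact_mod_cast sA_le_pow A h (by positivity : (0:ℝ) ≤ lam * ((h:ℝ) * u))
  have hmain : 2 * ((cntA A u : ℕ) : ℝ) ^ h ≤ ((cntA A (lam * ((h:ℝ) * u)) : ℕ) : ℝ) ^ h := by
    calc 2 * ((cntA A u : ℕ) : ℝ) ^ h ≤ 2 * ((sA A h ((h:ℝ) * u) : ℕ) : ℝ) :=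
          mul_le_mul_of_nonneg_left hlow (by norm_num)
      _ ≤ ((sA A h (lam * ((h:ℝ) * u)) : ℕ) : ℝ) := key
      _ ≤ _ := hup
  have heq : lam * ((h:ℝ) * u) = (lam * h) * u := by ring
  rw [heq] at hmain
  have hfin : (c' * ((cntA A u : ℕ) : ℝ)) ^ h ≤ ((cntA A ((lam * h) * u) : ℕ) : ℝ) ^ h := by
    rw [mul_pow, hc'h]; exact hmain
  exact (pow_le_pow_iff_left₀ (by positivity) (by positivity) (by omega)).1 hfin

end Main

section TheoremProof
end TheoremProof


theorem stmt_13 (A : Set ℕ) (hA : A.Infinite) :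
    List.TFAE [
      -- (i) A has positive increase
      PositiveIncrease (fun x : ℝ => (cntA A x : ℝ)),
      -- (ii) a_{2n} = O(a_n)
      (fun n : ℕ => (seqA A (2 * n) : ℝ)) =O[atTop] (fun n : ℕ => (seqA A n : ℝ)),
      -- (iii) liminf A(λx)/A(x) > 1 for some λ > 1
      ∃ lam : ℝ, 1 < lam ∧
        1 < Filter.liminf (fun x : ℝ => (cntA A (lam * x) : ℝ) / (cntA A x : ℝ)) atTop,
      -- (iv) s_{A,h} has positive increase for some h ≥ 1
      ∃ h : ℕ, 1 ≤ h ∧ PositiveIncrease (fun x : ℝ => (sA A h x : ℝ)),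
      -- (iv') s_{A,h} has positive increase for every h ≥ 1
      ∀ h : ℕ, 1 ≤ h → PositiveIncrease (fun x : ℝ => (sA A h x : ℝ))
    ] := by
  tfae_have 1 → 3 := imp13 hA
  tfae_have 3 → 1 := imp31 hA
  tfae_have 1 → 2 := imp12 hA
  tfae_have 2 → 1 := imp21 hA
  tfae_have 1 → 5 := imp15 hA
  tfae_have 5 → 4 := fun h5 => ⟨1, le_rfl, h5 1 le_rfl⟩
  tfae_have 4 → 1 := imp41 hA
  tfae_finish
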